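/- For τ ∈ ℂ with |τ| = 1 and ω ∈ ℂ with |ω| ≤ 1, the function F_{τ,ω}(z,w) := (2z(1 − τz) − τ̄ω²w²)/(2(1 − τz) − ω²w²) maps the open unit ball 𝔹² ⊂ ℂ² into the closed unit disc and satisfies F_{τ,ω}(λ,0) = λ for all λ ∈ 𝔻. -/

import Mathlib

/-- The open unit Euclidean ball in ℂ². -/
def unitBall2 : Set (ℂ × ℂ) := {p | ‖p.1‖ ^ 2 + ‖p.2‖ ^ 2 < 1}

lemma key13 (u B : ℂ) (h : ‖B‖ ≤ 1 - ‖u‖ ^ 2) :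
    ‖u * (2*(1-u)) - B‖ ≤ ‖2*(1-u) - B‖ := by
  rw [Complex.norm_def, Complex.norm_def]
  apply Real.sqrt_le_sqrt
  have hre : ((1-u) * (2*(1-u)) * (starRingEnd ℂ) B).re ≤
      ‖(1-u) * (2*(1-u)) * (starRingEnd ℂ) B‖ := Complex.re_le_norm _
  have habs : ‖(1-u) * (2*(1-u)) * (starRingEnd ℂ) B‖
      = 2 * ‖1-u‖ ^ 2 * ‖B‖ := by
    rw [norm_mul, norm_mul, Complex.norm_conj, norm_mul, Complex.norm_two]
    ring
  rw [habs] at hre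
  have h1 : Complex.normSq (u * (2*(1-u)) - B)
      = Complex.normSq u * Complex.normSq (2*(1-u)) + Complex.normSq B
        - 2 * (u * (2*(1-u)) * (starRingEnd ℂ) B).re := by
    rw [Complex.normSq_sub, Complex.normSq_mul]
  have h2 : Complex.normSq (2*(1-u) - B)
      = Complex.normSq (2*(1-u)) + Complex.normSq B
        - 2 * ((2*(1-u)) * (starRingEnd ℂ) B).re := by
    rw [Complex.normSq_sub]
  have h3 : ((2*(1-u)) * (starRingEnd ℂ) B).re - (u * (2*(1-u)) * (starRingEnd ℂ) B).re
      = ((1-u) * (2*(1-u)) * (starRingEnd ℂ) B).re := by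
    rw [← Complex.sub_re]; ring_nf
  have h4 : Complex.normSq (2*(1-u)) = 4 * ‖1-u‖ ^ 2 := by
    rw [← Complex.sq_norm, norm_mul]; simp; ring
  have h5 : Complex.normSq u = ‖u‖ ^ 2 := (Complex.sq_norm u).symm
  have h6 : (0:ℝ) ≤ ‖1-u‖ ^ 2 := sq_nonneg _
  have h7 : (0:ℝ) ≤ ‖B‖ := norm_nonneg _
  nlinarith [hre, h3]

theorem stmt13 (τ ω : ℂ) (hτ : ‖τ‖ = 1) (hω : ‖ω‖ ≤ 1)
    (F : ℂ × ℂ → ℂ)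
    (hF : ∀ p : ℂ × ℂ, F p =
      (2*p.1*(1 - τ*p.1) - (starRingEnd ℂ) τ * ω^2 * p.2^2) / (2*(1 - τ*p.1) - ω^2*p.2^2)) :
    Set.MapsTo F unitBall2 (Metric.closedBall (0:ℂ) 1) ∧
    (∀ l ∈ Metric.ball (0:ℂ) 1, F (l, 0) = l) := by
  have hττ : τ * (starRingEnd ℂ) τ = 1 := by
    rw [Complex.mul_conj]
    norm_cast
    rw [Complex.normSq_eq_norm_sq, hτ]; norm_num
  constructor
  · intro p hp
    obtain ⟨z, w⟩ := p
    simp only [unitBall2, Set.mem_setOf_eq] at hp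
    set u := τ * z with hu
    set B := ω^2 * w^2 with hB
    have habsu : ‖u‖ = ‖z‖ := by
      rw [hu, norm_mul, hτ, one_mul]
    have habsB : ‖B‖ ≤ 1 - ‖u‖ ^ 2 := by
      rw [hB, habsu, norm_mul, norm_pow, norm_pow]
      have : ‖ω‖ ^ 2 ≤ 1 := by
        nlinarith [norm_nonneg ω]
      nlinarith [norm_nonneg w, sq_nonneg (‖w‖)]
    have hkey := key13 u B habsB
    have hnum : ‖2*z*(1 - τ*z) - (starRingEnd ℂ) τ * ω^2 * w^2‖
        = ‖u * (2*(1-u)) - B‖ := by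
      have : u * (2*(1-u)) - B = τ * (2*z*(1 - τ*z) - (starRingEnd ℂ) τ * ω^2 * w^2) := by
        rw [hu, hB]
        linear_combination ω^2*w^2 * hττ
      rw [this, norm_mul, hτ, one_mul]
    have hden : (2*(1 - τ*z) - ω^2*w^2) = 2*(1-u) - B := by rw [hu, hB]
    rw [Metric.mem_closedBall, dist_zero_right, hF]
    simp only
    rw [hden, norm_div, hnum]
    rcases eq_or_lt_of_le (norm_nonneg (2*(1-u) - B)) with h0 | h0
    · have : ‖u * (2*(1-u)) - B‖ = 0 := le_antisymm (by rw [← h0] at hkey; exact hkey) (norm_nonneg _)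
      rw [this, ← h0]; norm_num
    · rw [div_le_one h0]; exact hkey
  · intro l hl
    rw [hF]
    have hne : (1 - τ * l) ≠ 0 := by
      intro h
      have h1 : τ * l = 1 := by linear_combination -h
      have : ‖τ * l‖ = 1 := by rw [h1]; simp
      rw [norm_mul, hτ, one_mul] at this
      rw [Metric.mem_ball, dist_zero_right] at hl
      linarith
    simp only
    rw [show (0:ℂ)^2 = 0 by ring]
    rw [mul_zero, mul_zero, sub_zero, sub_zero]
    rw [show 2*l*(1 - τ*l) = l * (2*(1-τ*l)) by ring]
    rw [mul_div_assoc, div_self (by simpa using hne), mul_one]
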